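/- arXiv:2404.00713 — 4 statements merged into one kernel-verified Lean document; each statement's English description precedes it below -/
import Mathlib

section
/- Let ρ > 0, α > 0, and x = αe₁ = (α, 0) ∈ ℝ². Then prox_{(1/ρ)h₁}(x) = {0} if α < √(2/ρ); prox_{(1/ρ)h₁}(x) = {0, x} if α = √(2/ρ); and prox_{(1/ρ)h₁}(x) = {x} if α > √(2/ρ). -/
/-- The ℓ₁ norm on `ℝⁿ`. -/
noncomputable def l1norm {n : ℕ} (x : Fin n → ℝ) : ℝ := ∑ i, |x i|

/-- The ℓ₂ norm on `ℝⁿ`. -/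
noncomputable def l2norm {n : ℕ} (x : Fin n → ℝ) : ℝ := Real.sqrt (∑ i, (x i) ^ 2)

-- `h₁(x) = ‖x‖₁/‖x‖₂` for `x ≠ 0`, and `h₁(0) = 0`.
open Classical in
noncomputable def h1 {n : ℕ} (x : Fin n → ℝ) : ℝ :=
  if x = 0 then 0 else l1norm x / l2norm x

/-- `prox_{(1/ρ) f}(z)`: the set of global minimizers of `(ρ/2)‖u - z‖₂² + f(u)`. -/
noncomputable def proxSet {n : ℕ} (ρ : ℝ) (f : (Fin n → ℝ) → ℝ) (z : Fin n → ℝ) :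
    Set (Fin n → ℝ) :=
  {u | ∀ v : Fin n → ℝ,
    ρ / 2 * (∑ i, (u i - z i) ^ 2) + f u ≤ ρ / 2 * (∑ i, (v i - z i) ^ 2) + f v}

lemma l2_pos (u : Fin 2 → ℝ) (hu : u ≠ 0) : 0 < l2norm u := by
  rw [l2norm, Fin.sum_univ_two]
  apply Real.sqrt_pos.2
  have h : u 0 ≠ 0 ∨ u 1 ≠ 0 := by
    by_contra h; push_neg at h
    exact hu (by funext i; fin_cases i <;> simp [h.1, h.2])
  rcases h with h | h <;> positivity

lemma h1_ge_one (u : Fin 2 → ℝ) (hu : u ≠ 0) : 1 ≤ h1 u := by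
  rw [h1, if_neg hu]
  have h2 := l2_pos u hu
  rw [le_div_iff₀ h2, one_mul]
  rw [l1norm, l2norm, Fin.sum_univ_two, Fin.sum_univ_two]
  have hle : (u 0) ^ 2 + (u 1) ^ 2 ≤ (|u 0| + |u 1|) ^ 2 := by
    nlinarith [sq_abs (u 0), sq_abs (u 1),
      mul_nonneg (abs_nonneg (u 0)) (abs_nonneg (u 1))]
  calc Real.sqrt ((u 0) ^ 2 + (u 1) ^ 2) ≤ Real.sqrt ((|u 0| + |u 1|) ^ 2) :=
        Real.sqrt_le_sqrt hle
    _ = |u 0| + |u 1| := Real.sqrt_sq (by positivity)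

/-- The prox objective. -/
noncomputable def Fobj (ρ : ℝ) (x u : Fin 2 → ℝ) : ℝ :=
  ρ / 2 * (∑ i, (u i - x i) ^ 2) + h1 u

theorem stmt_16 (ρ α : ℝ) (hρ : 0 < ρ) (hα : 0 < α) :
    (α < Real.sqrt (2 / ρ) → proxSet ρ h1 ![α, 0] = {0}) ∧
    (α = Real.sqrt (2 / ρ) → proxSet ρ h1 ![α, 0] = {0, ![α, 0]}) ∧
    (Real.sqrt (2 / ρ) < α → proxSet ρ h1 ![α, 0] = {![α, 0]}) := by
  set x : Fin 2 → ℝ := ![α, 0] with hxdef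
  have hx0 : x ≠ 0 := by
    intro h
    have := congrFun h 0
    simp [hxdef] at this
    exact hα.ne' this
  have hh1x : h1 x = 1 := by
    rw [h1, if_neg hx0, l1norm, l2norm, Fin.sum_univ_two, Fin.sum_univ_two]
    simp [hxdef, abs_of_pos hα, Real.sqrt_sq hα.le, div_self hα.ne']
  set F : (Fin 2 → ℝ) → ℝ := Fobj ρ x with hFdef
  have hprox : proxSet ρ h1 x = {u | ∀ v, F u ≤ F v} := rfl
  have hF0 : F 0 = ρ / 2 * α ^ 2 := by
    simp [hFdef, Fobj, h1, Fin.sum_univ_two, hxdef]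
  have hFx : F x = 1 := by
    simp [hFdef, Fobj, hh1x]
  have key : ∀ u, u ≠ 0 → u ≠ x → 1 < F u := by
    intro u hu hux
    have h1u := h1_ge_one u hu
    have hx00 : x 0 = α := by simp [hxdef]
    have hx11 : x 1 = 0 := by simp [hxdef]
    have hpos : 0 < ∑ i, (u i - x i) ^ 2 := by
      rw [Fin.sum_univ_two, hx00, hx11]
      have h : u 0 ≠ α ∨ u 1 ≠ 0 := by
        by_contra h; push_neg at h
        exact hux (by funext i; fin_cases i <;> simp [hxdef, h.1, h.2])
      rcases h with h | h
      · have hne : u 0 - α ≠ 0 := sub_ne_zero.2 h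
        have h0 : 0 < (u 0 - α) ^ 2 := by positivity
        nlinarith [sq_nonneg (u 1 - 0)]
      · have hne : u 1 - 0 ≠ 0 := sub_ne_zero.2 h
        have h0 : 0 < (u 1 - 0) ^ 2 := by positivity
        nlinarith [sq_nonneg (u 0 - α)]
    have hmul : 0 < ρ / 2 * (∑ i, (u i - x i) ^ 2) :=
      mul_pos (by linarith) hpos
    simp only [hFdef, Fobj]
    linarith
  refine ⟨?_, ?_, ?_⟩
  · intro hlt
    have h2 : α ^ 2 < 2 / ρ := (Real.lt_sqrt hα.le).1 hlt
    have hcmp : ρ / 2 * α ^ 2 < 1 := by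
      rw [lt_div_iff₀ hρ] at h2; nlinarith
    rw [hprox]
    ext u
    simp only [Set.mem_setOf_eq, Set.mem_singleton_iff]
    constructor
    · intro hmin
      by_contra hu
      have hle := hmin 0
      rw [hF0] at hle
      by_cases hux : u = x
      · rw [hux, hFx] at hle; linarith
      · have := key u hu hux; linarith
    · rintro rfl v
      rw [hF0]
      by_cases hv0 : v = 0
      · rw [hv0, hF0]
      · by_cases hvx : v = x
        · rw [hvx, hFx]; linarith
        · have := key v hv0 hvx; linarith
  · intro heq
    have h2 : α ^ 2 = 2 / ρ := by
      rw [heq, Real.sq_sqrt (by positivity)]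
    have hcmp : ρ / 2 * α ^ 2 = 1 := by
      field_simp [h2]
      rw [h2]; field_simp
    have hlb : ∀ v, (1:ℝ) ≤ F v := by
      intro v
      by_cases hv0 : v = 0
      · rw [hv0, hF0, hcmp]
      · by_cases hvx : v = x
        · rw [hvx, hFx]
        · exact (key v hv0 hvx).le
    rw [hprox]
    ext u
    simp only [Set.mem_setOf_eq, Set.mem_insert_iff, Set.mem_singleton_iff]
    constructor
    · intro hmin
      by_contra hu
      push_neg at hu
      have := key u hu.1 hu.2
      have hle := hmin 0
      rw [hF0, hcmp] at hle
      linarith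
    · rintro (rfl | rfl) v
      · rw [hF0, hcmp]; exact hlb v
      · rw [hFx]; exact hlb v
  · intro hgt
    have h2 : 2 / ρ < α ^ 2 := (Real.sqrt_lt' hα).1 hgt
    have hcmp : 1 < ρ / 2 * α ^ 2 := by
      rw [div_lt_iff₀ hρ] at h2; nlinarith
    rw [hprox]
    ext u
    simp only [Set.mem_setOf_eq, Set.mem_singleton_iff]
    constructor
    · intro hmin
      by_contra hu
      have hle := hmin x
      rw [hFx] at hle
      by_cases hu0 : u = 0
      · rw [hu0, hF0] at hle; linarith
      · have := key u hu0 hu; linarith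
    · rintro rfl v
      rw [hFx]
      by_cases hv0 : v = 0
      · rw [hv0, hF0]; linarith
      · by_cases hvx : v = x
        · rw [hvx, hFx]
        · exact (key v hv0 hvx).le
end

section
/- Let ρ > 0 and x = (x₁, x₂) ∈ ℝ²_↓ with x₁ > 0 and κ := x₂/x₁ ∈ [0, 1). Set α := arctan(2κ/(1−κ²)) ∈ [0, π/2) and define L : [0, α/2] → ℝ by L(θ) = sin(2θ − α)/cos(θ + π/4) + 2√2/(ρ‖x‖₂²). Then: (i) L is strictly convex on [0, α/2]; (ii) L(0) is positive, zero, or negative according as ρx₁x₂ − 1 is negative, zero, or positive, and L'(0) ≥ 0 if κ ≤ (√5 − 1)/2 while L'(0) < 0 if κ > (√5 − 1)/2; (iii) L has at most two roots in [0, α/2]. -/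
open Real

lemma trig_idB (θ α : ℝ) :
    2 * Real.cos (2*θ - α) * Real.cos (θ + π/4) + Real.sin (2*θ - α) * Real.sin (θ + π/4)
      = Real.cos α * Real.sin (θ + π/4) + 2 * Real.sin (θ + π/4 - α) * Real.cos (θ + π/4)^2 := by
  set φ := θ + π/4 with hφ
  have e1 : Real.cos (2*θ - α) = Real.sin (2*φ - α) := by
    rw [show 2*θ - α = (2*φ - α) - π/2 by rw [hφ]; ring, Real.cos_sub_pi_div_two]
  have e2 : Real.sin (2*θ - α) = -Real.cos (2*φ - α) := by
    rw [show 2*θ - α = (2*φ - α) - π/2 by rw [hφ]; ring, Real.sin_sub_pi_div_two]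
  have e3 : Real.sin (2*φ - α) = Real.sin φ * Real.cos (φ - α) + Real.cos φ * Real.sin (φ - α) := by
    rw [show 2*φ - α = φ + (φ - α) by ring, Real.sin_add]
  have e4 : Real.cos (2*φ - α) = Real.cos φ * Real.cos (φ - α) - Real.sin φ * Real.sin (φ - α) := by
    rw [show 2*φ - α = φ + (φ - α) by ring, Real.cos_add]
  have e5 := Real.cos_sub φ (φ - α)
  rw [show φ - (φ - α) = α by ring] at e5
  have e6 : Real.sin φ ^ 2 + Real.cos φ ^ 2 = 1 := Real.sin_sq_add_cos_sq φ
  rw [e1, e2, e3, e4, e5]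
  nlinarith [e6]

set_option maxHeartbeats 1000000 in
theorem stmt_17 (ρ : ℝ) (hρ : 0 < ρ) (x : Fin 2 → ℝ)
    (hx1 : 0 ≤ x 1) (hx2 : x 1 < x 0) (hx0 : 0 < x 0)
    (κ α : ℝ) (hκ : κ = x 1 / x 0)
    (hα : α = Real.arctan (2 * κ / (1 - κ ^ 2)))
    (L : ℝ → ℝ)
    (hL : ∀ θ : ℝ, L θ = Real.sin (2 * θ - α) / Real.cos (θ + Real.pi / 4) +
      2 * Real.sqrt 2 / (ρ * (x 0 ^ 2 + x 1 ^ 2))) :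
    -- (i) strict convexity on [0, α/2]
    StrictConvexOn ℝ (Set.Icc 0 (α / 2)) L ∧
    -- (ii) sign of L(0) and of L'(0)
    ((ρ * x 0 * x 1 < 1 → 0 < L 0) ∧
     (ρ * x 0 * x 1 = 1 → L 0 = 0) ∧
     (1 < ρ * x 0 * x 1 → L 0 < 0) ∧
     (κ ≤ (Real.sqrt 5 - 1) / 2 → 0 ≤ deriv L 0) ∧
     ((Real.sqrt 5 - 1) / 2 < κ → deriv L 0 < 0)) ∧
    -- (iii) L has at most two roots in [0, α/2]
    (∀ θ₁ θ₂ θ₃ : ℝ, θ₁ ∈ Set.Icc 0 (α / 2) → θ₂ ∈ Set.Icc 0 (α / 2) →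
      θ₃ ∈ Set.Icc 0 (α / 2) → L θ₁ = 0 → L θ₂ = 0 → L θ₃ = 0 →
      θ₁ = θ₂ ∨ θ₁ = θ₃ ∨ θ₂ = θ₃) := by
  
  have hpi := Real.pi_pos
  have hκ0 : 0 ≤ κ := by rw [hκ]; positivity
  have hκ1 : κ < 1 := by rw [hκ]; exact (div_lt_one hx0).mpr hx2
  have hα2 : α = 2 * Real.arctan κ := by
    have hb0 : 0 ≤ Real.arctan κ := by
      rw [← Real.arctan_zero]; exact Real.arctan_strictMono.monotone hκ0
    have hb1 : Real.arctan κ < π/4 := by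
      rw [← Real.arctan_one]; exact Real.arctan_strictMono hκ1
    have ht : Real.tan (2 * Real.arctan κ) = 2 * κ / (1 - κ ^ 2) := by
      rw [Real.tan_two_mul, Real.tan_arctan]
    rw [hα, ← ht, Real.arctan_tan] <;> nlinarith
  set β := Real.arctan κ with hβ
  have hb0 : 0 ≤ β := by
    rw [hβ, ← Real.arctan_zero]; exact Real.arctan_strictMono.monotone hκ0
  have hb1 : β < π/4 := by
    rw [hβ, ← Real.arctan_one]; exact Real.arctan_strictMono hκ1
  have hden : (0:ℝ) < 1 + κ^2 := by positivity
  have hsq : Real.sqrt (1 + κ^2) ^ 2 = 1 + κ^2 := Real.sq_sqrt (by positivity)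
  have hsins : Real.sin β = κ / Real.sqrt (1 + κ^2) := Real.sin_arctan κ
  have hcoss : Real.cos β = 1 / Real.sqrt (1 + κ^2) := Real.cos_arctan κ
  have hsqpos : 0 < Real.sqrt (1 + κ^2) := Real.sqrt_pos.mpr (by positivity)
  have hsinα : Real.sin α = 2*κ/(1+κ^2) := by
    rw [hα2, Real.sin_two_mul, hsins, hcoss]
    field_simp
    rw [hsq]
  have hcosα : Real.cos α = (1-κ^2)/(1+κ^2) := by
    rw [hα2, Real.cos_two_mul, hcoss]
    field_simp
    rw [hsq]
    ring
  have hcosαpos : 0 < Real.cos α := by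
    rw [hcosα]; exact div_pos (by nlinarith) hden
  have hαnn : 0 ≤ α := by rw [hα2]; linarith
  have hαlt : α < π/2 := by rw [hα2]; linarith
  -- constant
  have hLfun : L = fun θ => Real.sin (2 * θ - α) / Real.cos (θ + π/4) + 2 * Real.sqrt 2 / (ρ * (x 0 ^ 2 + x 1 ^ 2)) := funext hL
  -- first derivative
  set G : ℝ → ℝ := fun θ => Real.cos α * Real.sin (θ + π/4) / Real.cos (θ + π/4)^2
      + 2 * Real.sin (θ + π/4 - α) with hG
  have hLderiv : ∀ θ : ℝ, Real.cos (θ + π/4) ≠ 0 → HasDerivAt L (G θ) θ := by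
    intro θ h
    have h1 : HasDerivAt (fun t : ℝ => Real.sin (2*t - α)) (2 * Real.cos (2*θ - α)) θ := by
      have := (((hasDerivAt_id θ).const_mul (2:ℝ)).sub_const α).sin
      simpa [mul_comm] using this
    have h2 : HasDerivAt (fun t : ℝ => Real.cos (t + π/4)) (-Real.sin (θ + π/4)) θ := by
      simpa using ((hasDerivAt_id θ).add_const (π/4)).cos
    have h3 := (h1.fun_div h2 h).add_const (2 * Real.sqrt 2 / (ρ * (x 0 ^ 2 + x 1 ^ 2)))
    have hval : Real.cos α * Real.sin (θ + π/4) / Real.cos (θ + π/4)^2 + 2 * Real.sin (θ + π/4 - α)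
        = (2 * Real.cos (2 * θ - α) * Real.cos (θ + π / 4) - Real.sin (2 * θ - α) * -Real.sin (θ + π / 4)) / Real.cos (θ + π / 4) ^ 2 := by
      have hid := trig_idB θ α
      set c := Real.cos (θ + π/4)
      set s := Real.sin (θ + π/4)
      set a := Real.cos (2*θ - α)
      set b := Real.sin (2*θ - α)
      set d := Real.sin (θ + π/4 - α)
      set e := Real.cos α
      field_simp
      linear_combination -hid
    rw [hLfun, show G θ = _ from hval]
    exact h3
  -- second derivative
  set G2 : ℝ → ℝ := fun θ => Real.cos α * (Real.cos (θ + π/4)^2 + 2 * Real.sin (θ + π/4)^2)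
      / Real.cos (θ + π/4)^3 + 2 * Real.cos (θ + π/4 - α) with hG2
  have hGderiv : ∀ θ : ℝ, Real.cos (θ + π/4) ≠ 0 → HasDerivAt G (G2 θ) θ := by
    intro θ h
    have hid : HasDerivAt (fun t : ℝ => t + π/4) 1 θ := (hasDerivAt_id θ).add_const _
    have hu : HasDerivAt (fun t : ℝ => Real.cos α * Real.sin (t + π/4))
        (Real.cos α * (Real.cos (θ + π/4) * 1)) θ := hid.sin.const_mul _
    have hv : HasDerivAt (fun t : ℝ => Real.cos (t + π/4)^2)
        (2 * Real.cos (θ + π/4)^1 * (-Real.sin (θ + π/4) * 1)) θ := by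
      simpa using hid.cos.fun_pow 2
    have hw : HasDerivAt (fun t : ℝ => 2 * Real.sin (t + π/4 - α))
        (2 * (Real.cos (θ + π/4 - α) * 1)) θ :=
      ((((hasDerivAt_id θ).add_const (π/4)).sub_const α).sin).const_mul 2
    have h3 := (hu.fun_div hv (pow_ne_zero 2 h)).fun_add hw
    have hval : Real.cos α * (Real.cos (θ + π/4)^2 + 2 * Real.sin (θ + π/4)^2)
        / Real.cos (θ + π/4)^3 + 2 * Real.cos (θ + π/4 - α)
        = (Real.cos α * (Real.cos (θ + π/4) * 1) * Real.cos (θ + π/4)^2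
        - Real.cos α * Real.sin (θ + π/4) * (2 * Real.cos (θ + π/4)^1 * (-Real.sin (θ + π/4) * 1)))
        / (Real.cos (θ + π/4)^2)^2 + 2 * (Real.cos (θ + π/4 - α) * 1) := by
      set c := Real.cos (θ + π/4)
      set s := Real.sin (θ + π/4)
      set d := Real.cos (θ + π/4 - α)
      set e := Real.cos α
      field_simp
      ring
    rw [show G2 θ = _ from hval]
    exact h3
  -- open set facts
  have hUcos : ∀ t ∈ Set.Ioo (-(π/4)) (π/4), 0 < Real.cos (t + π/4) := by
    intro t ht
    apply Real.cos_pos_of_mem_Ioo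
    constructor
    · linarith [ht.1]
    · linarith [ht.2]
  have hsub : Set.Icc 0 (α/2) ⊆ Set.Ioo (-(π/4)) (π/4) := by
    intro t ht
    constructor
    · linarith [ht.1]
    · linarith [ht.2]
  have hderivL_eq : Set.EqOn (deriv L) G (Set.Ioo (-(π/4)) (π/4)) :=
    fun t ht => (hLderiv t (hUcos t ht).ne').deriv
  -- strict convexity
  have hconv : StrictConvexOn ℝ (Set.Icc 0 (α/2)) L := by
    apply strictConvexOn_of_deriv2_pos (convex_Icc _ _)
    · intro t ht
      exact (hLderiv t (hUcos t (hsub ht)).ne').continuousAt.continuousWithinAt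
    · intro t ht
      rw [interior_Icc] at ht
      have htU : t ∈ Set.Ioo (-(π/4)) (π/4) := hsub (Set.Ioo_subset_Icc_self ht)
      have hc : 0 < Real.cos (t + π/4) := hUcos t htU
      have hev : deriv L =ᶠ[nhds t] G :=
        Filter.eventuallyEq_of_mem (isOpen_Ioo.mem_nhds htU) hderivL_eq
      have hit : deriv^[2] L t = G2 t := by
        show deriv (deriv L) t = G2 t
        rw [hev.deriv_eq]
        exact (hGderiv t hc.ne').deriv
      rw [hit, hG2]
      have hs : 0 < Real.sin (t + π/4) := by
        apply Real.sin_pos_of_pos_of_lt_pi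
        · linarith [ht.1]
        · linarith [htU.2]
      have hcφα : 0 < Real.cos (t + π/4 - α) := by
        apply Real.cos_pos_of_mem_Ioo
        constructor
        · linarith [ht.1, hαlt]
        · linarith [ht.2, hαnn]
      have t1 : 0 < Real.cos α * (Real.cos (t + π/4)^2 + 2 * Real.sin (t + π/4)^2)
          / Real.cos (t + π/4)^3 :=
        div_pos (mul_pos hcosαpos (by nlinarith)) (by positivity)
      linarith
  -- value at 0
  have hx1κ : x 1 = κ * x 0 := by rw [hκ]; field_simp
  have hnpos : (0:ℝ) < x 0 ^ 2 + x 1 ^ 2 := by positivity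
  have h2 : Real.sqrt 2 ^ 2 = 2 := Real.sq_sqrt (by norm_num)
  have h2pos : 0 < Real.sqrt 2 := Real.sqrt_pos.mpr (by norm_num)
  have hL0 : L 0 = 2 * Real.sqrt 2 / (ρ * (x 0 ^ 2 + x 1 ^ 2)) * (1 - ρ * x 0 * x 1) := by
    rw [hL 0, show 2 * (0:ℝ) - α = -α by ring, Real.sin_neg, zero_add,
      Real.cos_pi_div_four, hsinα, hx1κ]
    have hn : (0:ℝ) < x 0 ^ 2 + (κ * x 0)^2 := by positivity
    clear_value β G G2
    field_simp [hden.ne', hρ.ne', hn.ne', h2pos.ne']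
    ring_nf
    rw [h2]
  have hP : 0 < 2 * Real.sqrt 2 / (ρ * (x 0 ^ 2 + x 1 ^ 2)) := by positivity
  -- derivative at 0
  have hd0 : deriv L 0 = 2 * Real.sqrt 2 * (1 - κ - κ^2) / (1 + κ^2) := by
    have hc0 : Real.cos ((0:ℝ) + π/4) ≠ 0 := by
      rw [zero_add, Real.cos_pi_div_four]; positivity
    rw [(hLderiv 0 hc0).deriv]
    show Real.cos α * Real.sin (0 + π/4) / Real.cos (0 + π/4)^2 + 2 * Real.sin (0 + π/4 - α) = _
    rw [zero_add, show π/4 - α = -(α - π/4) by ring, Real.sin_neg, Real.sin_sub,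
      Real.sin_pi_div_four, Real.cos_pi_div_four, hsinα, hcosα]
    clear_value β G G2
    field_simp [hden.ne', h2pos.ne']
    ring_nf
    rw [h2]
    ring
  have h5 : Real.sqrt 5 ^ 2 = 5 := Real.sq_sqrt (by norm_num)
  have h5nn : 0 ≤ Real.sqrt 5 := Real.sqrt_nonneg 5
  refine ⟨hconv, ⟨?_, ?_, ?_, ?_, ?_⟩, ?_⟩
  · intro h; rw [hL0]; exact mul_pos hP (by linarith)
  · intro h; rw [hL0, h]; ring
  · intro h; rw [hL0]; exact mul_neg_of_pos_of_neg hP (by linarith)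
  · intro h
    rw [hd0]
    apply div_nonneg _ (by positivity)
    apply mul_nonneg (by positivity)
    nlinarith [mul_nonneg (sub_nonneg.mpr h) (show (0:ℝ) ≤ κ + (Real.sqrt 5 + 1)/2 by linarith)]
  · intro h
    rw [hd0]
    apply div_neg_of_neg_of_pos _ (by positivity)
    have : 1 - κ - κ^2 < 0 := by
      nlinarith [mul_pos (sub_pos.mpr h) (show (0:ℝ) < κ + (Real.sqrt 5 + 1)/2 by nlinarith)]
    nlinarith [h2pos]
  · -- at most two roots
    have key : ∀ a b c : ℝ, a ∈ Set.Icc 0 (α/2) → c ∈ Set.Icc 0 (α/2) → a < b → b < c →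
        L a = 0 → L b = 0 → L c = 0 → False := by
      intro a b c ha hc hab hbc la lb lc
      have hca : 0 < c - a := by linarith
      have ht1 : 0 < (c - b)/(c - a) := div_pos (by linarith) hca
      have ht2 : 0 < (b - a)/(c - a) := div_pos (by linarith) hca
      have hts : (c - b)/(c - a) + (b - a)/(c - a) = 1 := by field_simp; ring
      have hlt := hconv.2 ha hc (by intro hh; rw [hh] at hab; linarith) ht1 ht2 hts
      rw [smul_eq_mul, smul_eq_mul, smul_eq_mul, smul_eq_mul] at hlt
      have hcomb : (c - b)/(c - a) * a + (b - a)/(c - a) * c = b := by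
        field_simp; ring
      rw [hcomb, la, lb, lc] at hlt
      simp at hlt
    intro θ₁ θ₂ θ₃ m1 m2 m3 l1 l2 l3
    by_contra hcon
    push_neg at hcon
    obtain ⟨n12, n13, n23⟩ := hcon
    rcases n12.lt_or_gt with a|a <;> rcases n13.lt_or_gt with b|b <;>
      rcases n23.lt_or_gt with c|c
    · exact key θ₁ θ₂ θ₃ m1 m3 a c l1 l2 l3
    · exact key θ₁ θ₃ θ₂ m1 m2 b c l1 l3 l2
    · linarith
    · exact key θ₃ θ₁ θ₂ m3 m2 b a l3 l1 l2
    · exact key θ₂ θ₁ θ₃ m2 m3 a b l2 l1 l3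
    · linarith
    · exact key θ₂ θ₃ θ₁ m2 m1 c b l2 l3 l1
    · exact key θ₃ θ₂ θ₁ m3 m1 c a l3 l2 l1
end

section
/- Let ρ > 0 and let x ∈ ℝⁿ_↓ be such that for some 1 ≤ k < n the last k entries of x are zero and x_{n−k} > 0, i.e., x₁ ≥ … ≥ x_{n−k} > 0 = x_{n−k+1} = … = xₙ. Then every global minimizer w* of G(w) := −(ρ/2)⟨x, w⟩² + eᵀw over S^{n-1}_+ satisfies (w*)_{n−k+1} = … = (w*)ₙ = 0. -/
theorem stmt_18 {n : ℕ} (ρ : ℝ) (hρ : 0 < ρ)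
    (x : Fin n → ℝ) (hdesc : ∀ i j : Fin n, i ≤ j → x j ≤ x i) (hnonneg : ∀ i, 0 ≤ x i)
    (k : ℕ) (hk1 : 1 ≤ k) (hkn : k < n)
    (hzero : ∀ i : Fin n, n - k ≤ (i : ℕ) → x i = 0)
    (hpos : 0 < x ⟨n - k - 1, by omega⟩)
    (ws : Fin n → ℝ) (hws1 : ∑ i, (ws i) ^ 2 = 1) (hws2 : ∀ i, 0 ≤ ws i)
    (hmin : ∀ w : Fin n → ℝ, (∑ i, (w i) ^ 2 = 1) → (∀ i, 0 ≤ w i) →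
      -(ρ / 2) * (∑ i, x i * ws i) ^ 2 + (∑ i, ws i) ≤
        -(ρ / 2) * (∑ i, x i * w i) ^ 2 + (∑ i, w i)) :
    ∀ i : Fin n, n - k ≤ (i : ℕ) → ws i = 0 := by
  by_contra hcon
  push_neg at hcon
  obtain ⟨j, hjk, hjne⟩ := hcon
  have hjpos : 0 < ws j := lt_of_le_of_ne (hws2 j) (Ne.symm hjne)
  have hn : 0 < n := lt_of_le_of_lt (Nat.zero_le k) hkn
  set i0 : Fin n := ⟨0, hn⟩ with hi0def
  have hx0 : 0 < x i0 :=
    lt_of_lt_of_le hpos (hdesc i0 ⟨n - k - 1, by omega⟩ (by simp [Fin.le_def, hi0def]))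
  set H : Finset (Fin n) := Finset.univ.filter (fun i => (i : ℕ) < n - k) with hHdef
  set Tl : Finset (Fin n) := Finset.univ.filter (fun i => ¬ (i : ℕ) < n - k) with hTldef
  have hi0H : i0 ∈ H := by simp [hHdef, hi0def]; omega
  have hjTl : j ∈ Tl := by simp [hTldef]; omega
  set t := ∑ i ∈ Tl, ws i ^ 2 with htdef
  set T := ∑ i ∈ Tl, ws i with hTdef
  have ht0 : 0 < t := by
    have h1 : ws j ^ 2 ≤ t :=
      Finset.single_le_sum (f := fun i => ws i ^ 2) (fun i _ => sq_nonneg _) hjTl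
    nlinarith
  have hT0 : 0 ≤ T := Finset.sum_nonneg fun i _ => hws2 i
  have htT : t ≤ T ^ 2 := by
    have h1 : ∀ i ∈ Tl, ws i ^ 2 ≤ ws i * T := by
      intro i hi
      have : ws i ≤ T := Finset.single_le_sum (fun i _ => hws2 i) hi
      nlinarith [hws2 i]
    calc t ≤ ∑ i ∈ Tl, ws i * T := Finset.sum_le_sum h1
    _ = T ^ 2 := by rw [← Finset.sum_mul]; ring
  have hrt2 : Real.sqrt t ^ 2 = t := Real.sq_sqrt ht0.le
  have hrt0 : 0 ≤ Real.sqrt t := Real.sqrt_nonneg _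
  have hsT : Real.sqrt t ≤ T := by
    nlinarith
  set a := ws i0 with hadef
  have ha : 0 ≤ a := hws2 i0
  set s := Real.sqrt (a ^ 2 + t) with hsdef
  have hs0 : 0 ≤ s := Real.sqrt_nonneg _
  have hs2 : s ^ 2 = a ^ 2 + t := Real.sq_sqrt (by positivity)
  have has : a ≤ s := by nlinarith
  set δ := s - a with hδdef
  have hδ0 : 0 ≤ δ := by simp [hδdef, has]
  have hδrt : δ ≤ Real.sqrt t := by nlinarith
  -- the competitor
  set w : Fin n → ℝ := fun i => if (i : ℕ) < n - k then (if i = i0 then s else ws i) else 0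
    with hwdef
  have hwnn : ∀ i, 0 ≤ w i := by
    intro i
    simp only [hwdef]
    split_ifs
    · exact hs0
    · exact hws2 i
    · exact le_refl 0
  have hwTl : ∀ i ∈ Tl, w i = 0 := by
    intro i hi
    simp only [hTldef, Finset.mem_filter] at hi
    simp [hwdef, hi.2]
  have hwE : ∀ i ∈ H.erase i0, w i = ws i := by
    intro i hi
    rw [Finset.mem_erase] at hi
    have := hi.2
    simp only [hHdef, Finset.mem_filter] at this
    simp [hwdef, this.2, hi.1]
  have hwi0 : w i0 = s := by
    have h0 : ((i0 : Fin n) : ℕ) < n - k := by simp [hi0def]; omega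
    simp [hwdef, h0]
  have key : ∀ f : Fin n → ℝ, ∑ i, f i = ∑ i ∈ H, f i + ∑ i ∈ Tl, f i := by
    intro f
    rw [hHdef, hTldef]
    exact (Finset.sum_filter_add_sum_filter_not Finset.univ _ f).symm
  have keyH : ∀ f : Fin n → ℝ, ∑ i ∈ H, f i = f i0 + ∑ i ∈ H.erase i0, f i :=
    fun f => (Finset.add_sum_erase H f hi0H).symm
  -- sum of squares of w is 1
  have hone : a ^ 2 + (∑ i ∈ H.erase i0, ws i ^ 2) + t = 1 := by
    have := hws1
    rw [key (fun i => ws i ^ 2), keyH (fun i => ws i ^ 2)] at this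
    linarith [this]
  have hwsq : ∑ i, w i ^ 2 = 1 := by
    rw [key (fun i => w i ^ 2), keyH (fun i => w i ^ 2)]
    have e1 : ∑ i ∈ Tl, w i ^ 2 = 0 :=
      Finset.sum_eq_zero fun i hi => by rw [hwTl i hi]; ring
    have e2 : ∑ i ∈ H.erase i0, w i ^ 2 = ∑ i ∈ H.erase i0, ws i ^ 2 :=
      Finset.sum_congr rfl fun i hi => by rw [hwE i hi]
    rw [e1, e2, hwi0]
    linarith [hs2, hone]
  -- inner products
  have hxTl : ∀ i ∈ Tl, x i = 0 := by
    intro i hi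
    simp only [hTldef, Finset.mem_filter] at hi
    exact hzero i (by omega)
  have hxw : ∑ i, x i * w i = (∑ i, x i * ws i) + x i0 * δ := by
    rw [key (fun i => x i * w i), key (fun i => x i * ws i),
      keyH (fun i => x i * w i), keyH (fun i => x i * ws i)]
    have e1 : ∑ i ∈ Tl, x i * w i = 0 :=
      Finset.sum_eq_zero fun i hi => by rw [hxTl i hi]; ring
    have e1' : ∑ i ∈ Tl, x i * ws i = 0 :=
      Finset.sum_eq_zero fun i hi => by rw [hxTl i hi]; ring
    have e2 : ∑ i ∈ H.erase i0, x i * w i = ∑ i ∈ H.erase i0, x i * ws i :=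
      Finset.sum_congr rfl fun i hi => by rw [hwE i hi]
    rw [e1, e1', e2, hwi0]
    simp only [hδdef, hadef]
    ring
  have hsumw : ∑ i, w i = (∑ i, ws i) + δ - T := by
    rw [key (fun i => w i), key (fun i => ws i), keyH (fun i => w i), keyH (fun i => ws i)]
    have e1 : ∑ i ∈ Tl, w i = 0 := Finset.sum_eq_zero fun i hi => hwTl i hi
    have e2 : ∑ i ∈ H.erase i0, w i = ∑ i ∈ H.erase i0, ws i :=
      Finset.sum_congr rfl fun i hi => hwE i hi
    rw [e1, e2, hwi0, ← hTdef]
    simp only [hδdef, hadef]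
    ring
  -- minimality contradiction
  set P := ∑ i, x i * ws i with hPdef
  have hP0 : 0 ≤ P :=
    Finset.sum_nonneg fun i _ => mul_nonneg (hnonneg i) (hws2 i)
  have hmw := hmin w hwsq hwnn
  rw [hxw, hsumw] at hmw
  -- hmw : -(ρ/2)*P^2 + ∑ ws ≤ -(ρ/2)*(P + x i0 * δ)^2 + (∑ ws + δ - T)
  clear_value w t T a s δ P
  clear hmin hdesc hzero hnonneg hws1 hws2 hwnn hwTl hwE hwi0 key keyH hone hwsq
    hxTl hsumw hxw hjne hjpos hpos hjk htdef hTdef hsdef hδdef hPdef hi0H hjTl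
    hHdef hTldef hadef hwdef hi0def H Tl
  have hkey : 0 ≤ -(ρ / 2) * ((P + x i0 * δ) ^ 2 - P ^ 2) + δ - T := by linarith [hmw]
  have hexp : x i0 ^ 2 * δ ^ 2 ≤ (P + x i0 * δ) ^ 2 - P ^ 2 := by
    nlinarith [mul_nonneg (mul_nonneg hP0 hx0.le) hδ0]
  have hhalf : (0:ℝ) < ρ / 2 := by linarith
  have h3 : (ρ / 2) * (x i0 ^ 2 * δ ^ 2) ≤ (ρ / 2) * ((P + x i0 * δ) ^ 2 - P ^ 2) :=
    mul_le_mul_of_nonneg_left hexp hhalf.le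
  rcases lt_or_eq_of_le (hδrt.trans hsT) with hlt | heq
  · have h2 : 0 ≤ (ρ / 2) * (x i0 ^ 2 * δ ^ 2) := by positivity
    linarith
  · have hδeq : δ = Real.sqrt t := le_antisymm hδrt (by rw [heq]; exact hsT)
    have hδ2 : δ ^ 2 = t := by rw [hδeq]; exact hrt2
    rw [hδ2] at h3
    have h4 : 0 < (ρ / 2) * (x i0 ^ 2 * t) :=
      mul_pos hhalf (mul_pos (pow_pos hx0 2) ht0)
    linarith
end

section
/- Let ρ > 0 and let x ∈ ℝⁿ_↓ with xₙ > 0 (all entries positive). Let w* be a global minimizer of H(w) := −(ρ/2)⟨x, w⟩² + eᵀw over the set 𝔹ⁿ_↓ = {w ∈ ℝⁿ_↓ : ‖w‖₂ ≤ 1}. Then either w* = 0 or ‖w*‖₂ = 1 and w* is a global minimizer of H over S^{n-1}_+. Furthermore, in either case ⟨x, w*⟩ w* ∈ prox_{(1/ρ)h₁}(x). -/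
/-- Sorting lemma: any vector can be replaced by the descending sort of its
absolute values, which increases the inner product with a descending nonneg `x`. -/
lemma sort_lemma {n : ℕ} (x : Fin n → ℝ) (hdesc : ∀ i j : Fin n, i ≤ j → x j ≤ x i)
    (hx : ∀ i, 0 ≤ x i) (w : Fin n → ℝ) :
    ∃ w' : Fin n → ℝ, (∀ i j : Fin n, i ≤ j → w' j ≤ w' i) ∧ (∀ i, 0 ≤ w' i) ∧
      (∑ i, (w' i) ^ 2 = ∑ i, (w i) ^ 2) ∧ (∑ i, w' i = ∑ i, |w i|) ∧
      |∑ i, x i * w i| ≤ ∑ i, x i * w' i := by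
  set σ := Tuple.sort (fun i => -|w i|) with hσ
  refine ⟨fun i => |w (σ i)|, ?_, fun i => abs_nonneg _, ?_, ?_, ?_⟩
  · intro i j hij
    have := Tuple.monotone_sort (fun i => -|w i|) hij
    simpa using this
  · have := Equiv.sum_comp σ (fun i => |w i| ^ 2)
    simpa [sq_abs] using this
  · exact Equiv.sum_comp σ (fun i => |w i|)
  · have habs : |∑ i, x i * w i| ≤ ∑ i, x i * |w i| := by
      calc |∑ i, x i * w i| ≤ ∑ i, |x i * w i| := Finset.abs_sum_le_sum_abs _ _
        _ = ∑ i, x i * |w i| := by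
            refine Finset.sum_congr rfl fun i _ => ?_
            rw [abs_mul, abs_of_nonneg (hx i)]
    have hw'desc : ∀ i j : Fin n, i ≤ j → |w (σ j)| ≤ |w (σ i)| := by
      intro i j hij
      have := Tuple.monotone_sort (fun i => -|w i|) hij
      simp only [Function.comp_apply] at this
      linarith
    have hmono : Monovary x (fun i => |w (σ i)|) := by
      intro i j hij
      simp only at hij
      by_contra h
      push_neg at h
      have hij2 : i < j := by
        by_contra h'
        push_neg at h'
        exact absurd (hdesc j i h') (not_le.mpr h)
      exact absurd hij (not_lt.mpr (hw'desc i j hij2.le))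
    have h2 := hmono.sum_mul_comp_perm_le_sum_mul (σ := σ⁻¹)
    calc |∑ i, x i * w i| ≤ ∑ i, x i * |w i| := habs
      _ = ∑ i, x i * |w (σ (σ⁻¹ i))| := by simp
      _ ≤ ∑ i, x i * |w (σ i)| := h2

lemma aux_contra (a b T : ℝ) (ha : 0 < a) (hb : 0 < b) (hT : 1 < T)
    (h0 : -a + b ≤ 0) (h2 : -a + b ≤ -(a * T ^ 2) + T * b) : False := by
  nlinarith [mul_pos ha (sub_pos.mpr hT), mul_pos hb (sub_pos.mpr hT)]

lemma aux_mono (ρ a b S : ℝ) (hρ : 0 < ρ) (h : a ≤ b) :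
    -(ρ / 2) * b + S ≤ -(ρ / 2) * a + S := by nlinarith

lemma aux_lb (ρ S2 IP Sx A Hws cv rinv : ℝ) (hρ : 0 < ρ)
    (hthis : Hws ≤ -(ρ/2) * cv ^ 2 + rinv * A)
    (hkey : 0 ≤ S2 - 2 * IP + cv ^ 2) :
    ρ/2 * Sx + Hws ≤ ρ/2 * (S2 - 2 * IP + Sx) + rinv * A := by nlinarith

theorem stmt_19 {n : ℕ} (ρ : ℝ) (hρ : 0 < ρ)
    (x : Fin n → ℝ) (hdesc : ∀ i j : Fin n, i ≤ j → x j ≤ x i) (hpos : ∀ i, 0 < x i)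
    (H : (Fin n → ℝ) → ℝ)
    (hH : ∀ w : Fin n → ℝ, H w = -(ρ / 2) * (∑ i, x i * w i) ^ 2 + ∑ i, w i)
    (ws : Fin n → ℝ)
    (hws_desc : ∀ i j : Fin n, i ≤ j → ws j ≤ ws i) (hws_nonneg : ∀ i, 0 ≤ ws i)
    (hws_ball : ∑ i, (ws i) ^ 2 ≤ 1)
    (hmin : ∀ w : Fin n → ℝ, (∀ i j : Fin n, i ≤ j → w j ≤ w i) → (∀ i, 0 ≤ w i) →
      (∑ i, (w i) ^ 2 ≤ 1) → H ws ≤ H w) :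
    (ws = 0 ∨
      ((∑ i, (ws i) ^ 2 = 1) ∧
        ∀ w : Fin n → ℝ, (∑ i, (w i) ^ 2 = 1) → (∀ i, 0 ≤ w i) → H ws ≤ H w)) ∧
    (∑ i, x i * ws i) • ws ∈ proxSet ρ h1 x := by
  classical
  have hxnn : ∀ i, 0 ≤ x i := fun i => (hpos i).le
  have hH0 : H 0 = 0 := by simp [hH]
  have h1zero : h1 (0 : Fin n → ℝ) = 0 := by simp [h1]
  have hHws0 : H ws ≤ 0 := by
    have := hmin 0 (fun i j _ => le_rfl) (fun i => le_rfl) (by simp)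
    rwa [hH0] at this
  -- step 1: ws ≠ 0 → ∑ ws² = 1
  have hsphere : ws ≠ 0 → ∑ i, (ws i) ^ 2 = 1 := by
    intro hws0
    obtain ⟨j, hj⟩ := Function.ne_iff.mp hws0
    have hwsj : 0 < ws j := lt_of_le_of_ne (hws_nonneg j) (Ne.symm hj)
    set c := ∑ i, x i * ws i with hc
    set b := ∑ i, ws i with hb
    have hcpos : 0 < c :=
      Finset.sum_pos' (fun i _ => mul_nonneg (hxnn i) (hws_nonneg i))
        ⟨j, Finset.mem_univ j, mul_pos (hpos j) hwsj⟩
    have hbpos : 0 < b :=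
      Finset.sum_pos' (fun i _ => hws_nonneg i) ⟨j, Finset.mem_univ j, hwsj⟩
    have hspos : 0 < ∑ i, (ws i) ^ 2 :=
      Finset.sum_pos' (fun i _ => sq_nonneg _) ⟨j, Finset.mem_univ j, by positivity⟩
    by_contra hne
    have hslt : ∑ i, (ws i) ^ 2 < 1 := lt_of_le_of_ne hws_ball hne
    set T := (Real.sqrt (∑ i, (ws i) ^ 2))⁻¹ with hT
    have hsqrtpos : 0 < Real.sqrt (∑ i, (ws i) ^ 2) := Real.sqrt_pos.mpr hspos
    have hsqrtlt : Real.sqrt (∑ i, (ws i) ^ 2) < 1 := by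
      rw [show (1:ℝ) = Real.sqrt 1 by simp]
      exact Real.sqrt_lt_sqrt hspos.le hslt
    have hTgt : 1 < T := (one_lt_inv₀ hsqrtpos).mpr hsqrtlt
    have hT2 : T ^ 2 * (∑ i, (ws i) ^ 2) = 1 := by
      rw [hT, inv_pow, Real.sq_sqrt hspos.le]
      field_simp
    have hfeas := hmin (T • ws)
      (fun i j hij => mul_le_mul_of_nonneg_left (hws_desc i j hij) (by positivity))
      (fun i => mul_nonneg (by positivity) (hws_nonneg i))
      (by
        have : ∑ i, ((T • ws) i) ^ 2 = T ^ 2 * ∑ i, (ws i) ^ 2 := by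
          rw [Finset.mul_sum]
          exact Finset.sum_congr rfl fun i _ => by
            simp only [Pi.smul_apply, smul_eq_mul]; ring
        rw [this, hT2])
    have h0 := hmin 0 (fun i j _ => le_rfl) (fun i => le_rfl) (by simp)
    rw [hH0] at h0
    have hHT : H (T • ws) = -(ρ/2) * (T * c) ^ 2 + T * b := by
      rw [hH]
      have e1 : ∑ i, x i * (T • ws) i = T * c := by
        rw [hc, Finset.mul_sum]
        exact Finset.sum_congr rfl fun i _ => by simp only [Pi.smul_apply, smul_eq_mul]; ring
      have e2 : ∑ i, (T • ws) i = T * b := by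
        rw [hb, Finset.mul_sum]
        exact Finset.sum_congr rfl fun i _ => by
          simp only [Pi.smul_apply, smul_eq_mul]
      rw [e1, e2]
    have hHws : H ws = -(ρ/2) * c ^ 2 + b := hH ws
    rw [hHws] at h0 hfeas
    rw [hHT] at hfeas
    have ha : 0 < ρ/2 * c ^ 2 := by positivity
    have h0' : -(ρ/2 * c ^ 2) + b ≤ 0 := by linarith [h0]
    have hre : -(ρ/2) * (T * c) ^ 2 + T * b = -((ρ/2 * c ^ 2) * T ^ 2) + T * b := by ring
    rw [hre] at hfeas
    have h2' : -(ρ/2 * c ^ 2) + b ≤ -((ρ/2 * c ^ 2) * T ^ 2) + T * b := by linarith [hfeas]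
    exact aux_contra (ρ/2 * c ^ 2) b T ha hbpos hTgt h0' h2'
  -- step 2: sphere minimality
  have hspheremin : ∀ w : Fin n → ℝ, (∑ i, (w i) ^ 2 = 1) → (∀ i, 0 ≤ w i) → H ws ≤ H w := by
    intro w hw1 hwnn
    obtain ⟨w', hd', hnn', hsq', hsum', hip'⟩ := sort_lemma x hdesc hxnn w
    have habs : ∀ i, |w i| = w i := fun i => abs_of_nonneg (hwnn i)
    have hsum'' : ∑ i, w' i = ∑ i, w i := by
      rw [hsum']; exact Finset.sum_congr rfl fun i _ => habs i
    have hIPnn : 0 ≤ ∑ i, x i * w i :=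
      Finset.sum_nonneg fun i _ => mul_nonneg (hxnn i) (hwnn i)
    have hip'' : ∑ i, x i * w i ≤ ∑ i, x i * w' i :=
      le_trans (le_abs_self _) hip'
    have hfeas := hmin w' hd' hnn' (by rw [hsq', hw1])
    have hle : H w' ≤ H w := by
      rw [hH, hH, hsum'']
      have h2 : (∑ i, x i * w i) ^ 2 ≤ (∑ i, x i * w' i) ^ 2 :=
        pow_le_pow_left₀ hIPnn hip'' 2
      exact aux_mono ρ _ _ _ hρ h2
    exact le_trans hfeas hle
  -- lower bound for the prox objective
  have hlb : ∀ v : Fin n → ℝ,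
      ρ/2 * (∑ i, (x i) ^ 2) + H ws ≤ ρ/2 * (∑ i, (v i - x i) ^ 2) + h1 v := by
    intro v
    by_cases hv : v = 0
    · subst hv
      rw [h1zero]
      simp only [Pi.zero_apply, zero_sub, add_zero]
      have : ∑ i, (-x i) ^ 2 = ∑ i, (x i) ^ 2 :=
        Finset.sum_congr rfl fun i _ => by ring
      rw [this]
      linarith
    · obtain ⟨w'', hd, hnn, hsq, hsum, hip⟩ := sort_lemma x hdesc hxnn v
      have hr2pos : 0 < ∑ i, (v i) ^ 2 := by
        obtain ⟨j, hj⟩ := Function.ne_iff.mp hv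
        exact Finset.sum_pos' (fun i _ => sq_nonneg _)
          ⟨j, Finset.mem_univ j, pow_two_pos_of_ne_zero hj⟩
      set r := Real.sqrt (∑ i, (v i) ^ 2) with hrdef
      have hrpos : 0 < r := Real.sqrt_pos.mpr hr2pos
      have hr2 : r ^ 2 = ∑ i, (v i) ^ 2 := Real.sq_sqrt hr2pos.le
      set wh := fun i => r⁻¹ * w'' i with hwh
      have hwh1 : ∑ i, (wh i) ^ 2 = 1 := by
        have : ∑ i, (wh i) ^ 2 = r⁻¹ ^ 2 * ∑ i, (w'' i) ^ 2 := by
          rw [Finset.mul_sum]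
          exact Finset.sum_congr rfl fun i _ => by rw [hwh]; ring
        rw [this, hsq, ← hr2]
        field_simp
      have hfeas := hmin wh
        (fun i j hij => mul_le_mul_of_nonneg_left (hd i j hij) (by positivity))
        (fun i => mul_nonneg (by positivity) (hnn i))
        (le_of_eq hwh1)
      set cv := ∑ i, x i * wh i with hcv
      have hcveq : r * cv = ∑ i, x i * w'' i := by
        rw [hcv, Finset.mul_sum]
        refine Finset.sum_congr rfl fun i _ => ?_
        simp only [hwh]
        field_simp
      have hIPle : ∑ i, x i * v i ≤ r * cv := by
        rw [hcveq]
        exact le_trans (le_abs_self _) hip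
      have hwhsum : ∑ i, wh i = r⁻¹ * ∑ i, |v i| := by
        rw [← hsum, Finset.mul_sum]
      have hh1v : h1 v = r⁻¹ * ∑ i, |v i| := by
        simp only [h1, if_neg hv, l1norm, l2norm, ← hrdef]
        rw [div_eq_inv_mul]
      have hexp : ∑ i, (v i - x i) ^ 2
          = (∑ i, (v i) ^ 2) - 2 * (∑ i, x i * v i) + ∑ i, (x i) ^ 2 := by
        have h1' : ∀ i ∈ Finset.univ, (v i - x i) ^ 2
            = (v i) ^ 2 - 2 * (x i * v i) + (x i) ^ 2 := fun i _ => by ring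
        rw [Finset.sum_congr rfl h1', Finset.sum_add_distrib, Finset.sum_sub_distrib,
          ← Finset.mul_sum]
      have hHwh : H wh = -(ρ/2) * cv ^ 2 + r⁻¹ * ∑ i, |v i| := by
        rw [hH, ← hcv, hwhsum]
      have hkey : 0 ≤ (∑ i, (v i) ^ 2) - 2 * (∑ i, x i * v i) + cv ^ 2 := by
        nlinarith [sq_nonneg (r - cv)]
      have := le_trans hfeas (le_of_eq hHwh)
      rw [hexp, hh1v]
      exact aux_lb ρ _ _ _ _ _ _ _ hρ this hkey
  -- the value at the candidate point
  have heq : ρ/2 * (∑ i, (((∑ i, x i * ws i) • ws) i - x i) ^ 2) + h1 ((∑ i, x i * ws i) • ws)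
      = ρ/2 * (∑ i, (x i) ^ 2) + H ws := by
    by_cases hws0 : ws = 0
    · subst hws0
      rw [smul_zero, h1zero, hH0]
      simp only [Pi.zero_apply, zero_sub, add_zero]
      have : ∑ i, (-x i) ^ 2 = ∑ i, (x i) ^ 2 :=
        Finset.sum_congr rfl fun i _ => by ring
      rw [this]
    · have hsq1 := hsphere hws0
      obtain ⟨j, hj⟩ := Function.ne_iff.mp hws0
      have hwsj : 0 < ws j := lt_of_le_of_ne (hws_nonneg j) (Ne.symm hj)
      set c := ∑ i, x i * ws i with hc
      set b := ∑ i, ws i with hb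
      have hcpos : 0 < c :=
        Finset.sum_pos' (fun i _ => mul_nonneg (hxnn i) (hws_nonneg i))
          ⟨j, Finset.mem_univ j, mul_pos (hpos j) hwsj⟩
      have hune : c • ws ≠ 0 := by
        intro h
        have := congrFun h j
        simp only [Pi.smul_apply, smul_eq_mul, Pi.zero_apply] at this
        exact absurd this (by positivity)
      have hl2 : l2norm (c • ws) = c := by
        simp only [l2norm]
        have : ∑ i, ((c • ws) i) ^ 2 = c ^ 2 * ∑ i, (ws i) ^ 2 := by
          rw [Finset.mul_sum]
          exact Finset.sum_congr rfl fun i _ => by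
            simp only [Pi.smul_apply, smul_eq_mul]; ring
        rw [this, hsq1, mul_one, Real.sqrt_sq hcpos.le]
      have hl1 : l1norm (c • ws) = c * b := by
        simp only [l1norm]
        rw [hb, Finset.mul_sum]
        refine Finset.sum_congr rfl fun i _ => ?_
        simp only [Pi.smul_apply, smul_eq_mul]
        rw [abs_mul, abs_of_nonneg hcpos.le, abs_of_nonneg (hws_nonneg i)]
      have hh1u : h1 (c • ws) = b := by
        simp only [h1, if_neg hune, hl1, hl2]
        field_simp
      have hexp : ∑ i, ((c • ws) i - x i) ^ 2 = (∑ i, (x i) ^ 2) - c ^ 2 := by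
        have h1' : ∀ i ∈ Finset.univ, ((c • ws) i - x i) ^ 2
            = c ^ 2 * (ws i) ^ 2 - 2 * c * (x i * ws i) + (x i) ^ 2 := fun i _ => by
          simp only [Pi.smul_apply, smul_eq_mul]; ring
        rw [Finset.sum_congr rfl h1', Finset.sum_add_distrib, Finset.sum_sub_distrib,
          ← Finset.mul_sum, ← Finset.mul_sum, hsq1, ← hc]
        ring
      rw [hh1u, hexp, hH ws, ← hc, ← hb]
      ring
  refine ⟨?_, ?_⟩
  · by_cases hws0 : ws = 0
    · exact Or.inl hws0
    · exact Or.inr ⟨hsphere hws0, hspheremin⟩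
  · intro v
    rw [heq]
    exact hlb v
end
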